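/- Let σ ∈ (0,1), D > 0 and let P ≥ 1 be an integer such that σ^{1/2} + D·σ^{P/2} < 1. Then there exist D′ > 0 and λ ∈ (0,1) such that for every integer n ≥ 1, σ^{n/2} · ∑_{p=1}^{n} D^p · #{(n_1, …, n_p) ∈ ℕ^p : n_i ≥ P for all i, and n_1 + ⋯ + n_p = n} ≤ D′·λ^n. -/

import Mathlib

theorem comp_card_zero (P p n : ℕ) (hpn : n < p * P) :
    Nat.card {f : Fin p → ℕ // (∀ i, P ≤ f i) ∧ ∑ i, f i = n} = 0 := by
  have : IsEmpty {f : Fin p → ℕ // (∀ i, P ≤ f i) ∧ ∑ i, f i = n} := by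
    constructor
    rintro ⟨f, h1, h2⟩
    have : p * P ≤ ∑ i, f i := by
      calc p * P = ∑ _i : Fin p, P := by simp [Finset.sum_const, mul_comm]
      _ ≤ ∑ i, f i := Finset.sum_le_sum fun i _ => h1 i
    omega
  simp [Nat.card_eq_zero, this]

theorem comp_card_le (P p n : ℕ) (hpn : p * P ≤ n) :
    Nat.card {f : Fin p → ℕ // (∀ i, P ≤ f i) ∧ ∑ i, f i = n}
      ≤ (p + (n - p * P) - 1).choose (n - p * P) := by
  set m := n - p * P with hm
  have hcard : ∀ f : Fin p → Multiset (Fin p),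
      Multiset.card (∑ i, f i) = ∑ i, Multiset.card (f i) := by
    intro f
    induction (Finset.univ : Finset (Fin p)) using Finset.cons_induction with
    | empty => simp
    | cons a s ha ih => simp [Finset.sum_cons, ih]
  have key : ∀ f : {f : Fin p → ℕ // (∀ i, P ≤ f i) ∧ ∑ i, f i = n},
      Multiset.card (∑ i, Multiset.replicate (f.1 i - P) i) = m := by
    rintro ⟨f, h1, h2⟩
    have h3 : ∑ i, (f i - P) + p * P = n := by
      have : ∑ i, ((f i - P) + P) = n := by
        rw [← h2]; exact Finset.sum_congr rfl fun i _ => Nat.sub_add_cancel (h1 i)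
      rw [Finset.sum_add_distrib] at this
      simpa [Finset.sum_const, mul_comm] using this
    rw [hcard]
    simp only [Multiset.card_replicate]
    omega
  have hinj : Function.Injective
      (fun f : {f : Fin p → ℕ // (∀ i, P ≤ f i) ∧ ∑ i, f i = n} =>
        (⟨∑ i, Multiset.replicate (f.1 i - P) i, key f⟩ : Sym (Fin p) m)) := by
    rintro ⟨f, hf1, hf2⟩ ⟨g, hg1, hg2⟩ hfg
    have hfg' : (∑ i, Multiset.replicate (f i - P) i)
        = ∑ i, Multiset.replicate (g i - P) i := congrArg Subtype.val hfg
    simp only [Subtype.mk.injEq]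
    funext j
    have := congrArg (Multiset.count j) hfg'
    simp only [Multiset.count_sum', Multiset.count_replicate] at this
    rw [Finset.sum_ite_eq' Finset.univ j, Finset.sum_ite_eq' Finset.univ j] at this
    simp at this
    have := hf1 j; have := hg1 j
    omega
  calc Nat.card {f : Fin p → ℕ // (∀ i, P ≤ f i) ∧ ∑ i, f i = n}
      ≤ Nat.card (Sym (Fin p) m) := Nat.card_le_card_of_injective _ hinj
    _ = (p + m - 1).choose m := by
        rw [Nat.card_eq_fintype_card, Sym.card_sym_eq_choose, Fintype.card_fin]


set_option maxHeartbeats 1600000 in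
/-- Generating-function estimate: exponential decay of
`σ^{n/2} ∑_p D^p #{compositions of n into p parts each ≥ P}`. -/
theorem composition_count_estimate (σ D : ℝ) (hσ : σ ∈ Set.Ioo (0 : ℝ) 1) (hD : 0 < D)
    (P : ℕ) (hP : 1 ≤ P) (h : σ ^ ((1 : ℝ) / 2) + D * σ ^ ((P : ℝ) / 2) < 1) :
    ∃ D' > (0 : ℝ), ∃ lam : ℝ, lam ∈ Set.Ioo (0 : ℝ) 1 ∧ ∀ n : ℕ, 1 ≤ n →
      σ ^ ((n : ℝ) / 2) * ∑ p ∈ Finset.Icc 1 n,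
          D ^ p * (Nat.card {f : Fin p → ℕ // (∀ i, P ≤ f i) ∧ ∑ i, f i = n} : ℝ)
        ≤ D' * lam ^ n := by
  obtain ⟨hσ0, hσ1⟩ := hσ
  obtain ⟨s, hs_def⟩ : ∃ s : ℝ, s = σ ^ ((1 : ℝ) / 2) := ⟨_, rfl⟩
  have hs : ∀ k : ℕ, σ ^ ((k : ℝ) / 2) = s ^ k := by
    intro k
    rw [hs_def, ← Real.rpow_natCast (σ ^ ((1:ℝ)/2)) k, ← Real.rpow_mul hσ0.le]
    congr 1; ring
  have hs0 : 0 < s := hs_def ▸ Real.rpow_pos_of_pos hσ0 _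
  have hs1 : s < 1 := hs_def ▸ Real.rpow_lt_one hσ0.le hσ1 (by norm_num)
  obtain ⟨t, ht_def⟩ : ∃ t : ℝ, t = D * s ^ P := ⟨_, rfl⟩
  have ht0 : 0 < t := ht_def ▸ mul_pos hD (pow_pos hs0 P)
  have hst : s + t < 1 := by rw [ht_def, ← hs P, hs_def]; exact h
  obtain ⟨δ, hδ_def⟩ : ∃ δ : ℝ, δ = 1 - s - t := ⟨_, rfl⟩
  have hδ0 : 0 < δ := by rw [hδ_def]; linarith
  have hδ1 : δ < 1 := by rw [hδ_def]; linarith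
  obtain ⟨Q, hQ_def⟩ : ∃ Q : ℕ, Q = P - 1 := ⟨_, rfl⟩
  have hPQ : P = Q + 1 := by omega
  have hQ0 : (0 : ℝ) ≤ Q := Nat.cast_nonneg Q
  obtain ⟨η, hη_def⟩ : ∃ η : ℝ, η = δ / (2 * ((Q : ℝ) + 1) * (t + δ + 1)) := ⟨_, rfl⟩
  have hden : 0 < 2 * ((Q : ℝ) + 1) * (t + δ + 1) := by positivity
  have hη0 : 0 < η := hη_def ▸ div_pos hδ0 hden
  have hηdef : η * (2 * ((Q : ℝ) + 1) * (t + δ + 1)) = δ := by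
    rw [hη_def]; field_simp
  have hη2 : η < δ / 2 := by
    rw [hη_def, div_lt_div_iff₀ hden (by norm_num)]
    have h7 : (1:ℝ) * (t + δ + 1) ≤ ((Q:ℝ) + 1) * (t + δ + 1) :=
      mul_le_mul_of_nonneg_right (by linarith) (by linarith)
    nlinarith [mul_pos hδ0 ht0, mul_pos hδ0 hδ0]
  have hη1 : η < 1 / 2 := by linarith
  obtain ⟨lam, hlam_def⟩ : ∃ lam : ℝ, lam = 1 - η := ⟨_, rfl⟩
  have hlam0 : 0 < lam := by rw [hlam_def]; linarith
  have hlam1 : lam < 1 := by rw [hlam_def]; linarith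
  have hlamQ0 : 0 < lam ^ Q := pow_pos hlam0 Q
  -- Bernoulli
  have hB : 1 - (Q : ℝ) * η ≤ lam ^ Q := by
    have := one_add_mul_le_pow (a := -η) (by linarith) Q
    rw [hlam_def]
    calc 1 - (Q:ℝ) * η = 1 + (Q:ℝ) * (-η) := by ring
    _ ≤ (1 + -η) ^ Q := this
    _ = (1 - η) ^ Q := by ring_nf
  have hB1 : lam ^ Q ≤ 1 := pow_le_one₀ hlam0.le hlam1.le
  have hkey : s * lam ^ Q + t < lam ^ Q * lam := by
    have h1 : (1 - (Q:ℝ) * η) * (t + δ - η) ≤ lam ^ Q * (t + δ - η) :=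
      mul_le_mul_of_nonneg_right hB (by linarith)
    have hlams : lam - s = t + δ - η := by rw [hlam_def, hδ_def]; ring
    nlinarith [mul_le_mul_of_nonneg_right hB1 (by linarith : (0:ℝ) ≤ s), hη0.le,
      mul_nonneg hQ0 (mul_nonneg hη0.le hη0.le)]
  obtain ⟨u, hu_def⟩ : ∃ u : ℝ, u = t / lam ^ Q := ⟨_, rfl⟩
  have hu0 : 0 < u := hu_def ▸ div_pos ht0 hlamQ0
  have hut : u * lam ^ Q = t := by rw [hu_def]; exact div_mul_cancel₀ t (ne_of_gt hlamQ0)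
  have hus : u + s < lam := by
    have : (u + s) * lam ^ Q < lam * lam ^ Q := by nlinarith
    exact lt_of_mul_lt_mul_right this hlamQ0.le
  obtain ⟨θ, hθ_def⟩ : ∃ θ : ℝ, θ = (u + s) / lam := ⟨_, rfl⟩
  have hθ0 : 0 < θ := hθ_def ▸ div_pos (by linarith) hlam0
  have hθ1 : θ < 1 := hθ_def ▸ (div_lt_one hlam0).2 hus
  have hsu : s + u = θ * lam := by rw [hθ_def]; field_simp; ring
  obtain ⟨D', hD'_def⟩ : ∃ D' : ℝ, D' = u / (lam * (1 - θ)) := ⟨_, rfl⟩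
  have hD'0 : 0 < D' := hD'_def ▸ div_pos hu0 (mul_pos hlam0 (by linarith))
  refine ⟨D', hD'0, lam, ⟨hlam0, hlam1⟩, ?_⟩
  intro n hn
  rw [hs n, Finset.mul_sum]
  have hterm : ∀ p ∈ Finset.Icc 1 n,
      s ^ n * (D ^ p * (Nat.card {f : Fin p → ℕ // (∀ i, P ≤ f i) ∧ ∑ i, f i = n} : ℝ))
        ≤ u * θ ^ (p - 1) * lam ^ (n - 1) := by
    intro p hp
    rw [Finset.mem_Icc] at hp
    obtain ⟨hp1, hpn⟩ := hp
    by_cases hc : p * P ≤ n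
    · obtain ⟨m, hm⟩ : ∃ m : ℕ, m = n - p * P := ⟨_, rfl⟩
      have hN' : Nat.card {f : Fin p → ℕ // (∀ i, P ≤ f i) ∧ ∑ i, f i = n}
          ≤ (p - 1 + m).choose m := by
        calc Nat.card {f : Fin p → ℕ // (∀ i, P ≤ f i) ∧ ∑ i, f i = n}
            ≤ (p + (n - p * P) - 1).choose (n - p * P) := comp_card_le P p n hc
          _ = (p - 1 + m).choose m := by rw [hm]; congr 1; omega
      obtain ⟨N, hN_def⟩ : ∃ N : ℕ,
          N = Nat.card {f : Fin p → ℕ // (∀ i, P ≤ f i) ∧ ∑ i, f i = n} := ⟨_, rfl⟩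
      rw [← hN_def]
      have hN : (N : ℝ) ≤ ((p - 1 + m).choose m : ℝ) := by
        rw [hN_def]; exact_mod_cast hN'
      clear hN_def hN'
      have e1 : s ^ n * (D ^ p * (N : ℝ))
          = (u ^ (p-1) * s ^ m * (N : ℝ)) * (u * lam ^ (Q * p)) := by
        have h2 : s ^ n = s ^ (p * P) * s ^ m := by rw [← pow_add]; congr 1; omega
        have h3 : D ^ p * s ^ (p * P) = t ^ p := by
          rw [ht_def, mul_pow, ← pow_mul, mul_comm P p]
        have h4 : t ^ p = u ^ p * lam ^ (Q * p) := by
          rw [← hut, mul_pow, ← pow_mul, mul_comm Q p, mul_comm p Q]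
        have h5 : u ^ p = u ^ (p - 1) * u := by
          rw [← pow_succ]; congr 1; omega
        rw [h2]
        calc s ^ (p * P) * s ^ m * (D ^ p * (N:ℝ))
            = (D ^ p * s ^ (p*P)) * s ^ m * (N:ℝ) := by ring
          _ = t ^ p * s ^ m * (N:ℝ) := by rw [h3]
          _ = (u ^ (p-1) * s ^ m * (N:ℝ)) * (u * lam ^ (Q * p)) := by rw [h4, h5]; ring
      rw [e1]
      have hbin : u ^ (p-1) * s ^ m * (N : ℝ) ≤ (s + u) ^ (p - 1 + m) := by
        calc u ^ (p-1) * s ^ m * (N : ℝ)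
            ≤ u ^ (p-1) * s ^ m * ((p - 1 + m).choose m : ℝ) := by
              apply mul_le_mul_of_nonneg_left hN (by positivity)
          _ = s ^ m * u ^ ((p - 1 + m) - m) * ((p - 1 + m).choose m : ℝ) := by
              have : (p - 1 + m) - m = p - 1 := by omega
              rw [this]; ring
          _ ≤ (s + u) ^ (p - 1 + m) := by
              rw [add_pow]
              apply Finset.single_le_sum
                (f := fun k => s ^ k * u ^ (p - 1 + m - k) * ((p-1+m).choose k : ℝ))
                (fun k _ => by positivity)
              simp only [Finset.mem_range]
              omega
      calc (u ^ (p-1) * s ^ m * (N : ℝ)) * (u * lam ^ (Q * p))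
          ≤ (s + u) ^ (p - 1 + m) * (u * lam ^ (Q * p)) := by
            apply mul_le_mul_of_nonneg_right hbin (by positivity)
        _ = θ ^ (p - 1 + m) * (u * lam ^ ((p - 1 + m) + Q * p)) := by
            rw [hsu, mul_pow, pow_add lam]; ring
        _ ≤ θ ^ (p - 1) * (u * lam ^ (n - 1)) := by
            have hexp : (p - 1 + m) + Q * p = n - 1 := by
              have h6 : Q * p + p = p * P := by rw [hPQ]; ring
              omega
            rw [hexp]
            apply mul_le_mul_of_nonneg_right _ (by positivity)
            apply pow_le_pow_of_le_one hθ0.le hθ1.le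
            omega
        _ = u * θ ^ (p - 1) * lam ^ (n - 1) := by ring
    · have hz : Nat.card {f : Fin p → ℕ // (∀ i, P ≤ f i) ∧ ∑ i, f i = n} = 0 :=
        comp_card_zero P p n (by omega)
      rw [hz]
      have : (0:ℝ) ≤ u * θ ^ (p - 1) * lam ^ (n - 1) := by positivity
      simpa using this
  calc ∑ p ∈ Finset.Icc 1 n,
        s ^ n * (D ^ p * (Nat.card {f : Fin p → ℕ // (∀ i, P ≤ f i) ∧ ∑ i, f i = n} : ℝ))
      ≤ ∑ p ∈ Finset.Icc 1 n, u * θ ^ (p - 1) * lam ^ (n - 1) := Finset.sum_le_sum hterm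
    _ = u * lam ^ (n - 1) * ∑ p ∈ Finset.Icc 1 n, θ ^ (p - 1) := by
        rw [Finset.mul_sum]; apply Finset.sum_congr rfl; intros; ring
    _ ≤ u * lam ^ (n - 1) * (1 / (1 - θ)) := by
        apply mul_le_mul_of_nonneg_left _ (by positivity)
        have hre : ∑ p ∈ Finset.Icc 1 n, θ ^ (p - 1) = ∑ k ∈ Finset.range n, θ ^ k := by
          rw [← Finset.Ico_add_one_right_eq_Icc, Finset.sum_Ico_eq_sum_range]
          simp
        rw [hre, le_div_iff₀ (by linarith : (0:ℝ) < 1 - θ)]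
        have hgs := geom_sum_mul θ n
        have hθn : (0:ℝ) ≤ θ ^ n := by positivity
        nlinarith
    _ = D' * lam ^ n := by
        rw [hD'_def]
        have hln : lam ^ n = lam * lam ^ (n - 1) := by
          rw [← pow_succ']; congr 1; omega
        rw [hln]
        have h9 : (1:ℝ) - θ ≠ 0 := by linarith
        field_simp
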